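/- For every integer m ≥ 2 and all real numbers r, R with 0 < r < R, one has (sinh r / sinh R)^m ≤ (∫₀^r sinh^{m−1}(η) dη) / (∫₀^R sinh^{m−1}(η) dη) ≤ (sinh r / sinh R)^{m−1}. -/

import Mathlib

open Real MeasureTheory intervalIntegral

private lemma my_cheb (w g : ℝ → ℝ) (r R : ℝ) (hr : 0 ≤ r) (hrR : r ≤ R)
    (hw : Continuous w) (hg : Continuous g)
    (hw0 : ∀ x ∈ Set.Icc (0:ℝ) R, 0 ≤ w x)
    (h1 : ∀ x ∈ Set.Icc (0:ℝ) r, g x ≤ g r)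
    (h2 : ∀ x ∈ Set.Icc r R, g r ≤ g x) :
    (∫ η in (0:ℝ)..r, w η * g η) * (∫ η in (0:ℝ)..R, w η)
      ≤ (∫ η in (0:ℝ)..r, w η) * (∫ η in (0:ℝ)..R, w η * g η) := by
  have hwi : ∀ a b : ℝ, IntervalIntegrable w volume a b := fun a b => hw.intervalIntegrable a b
  have hwgi : ∀ a b : ℝ, IntervalIntegrable (fun η => w η * g η) volume a b :=
    fun a b => (hw.mul hg).intervalIntegrable a b
  rw [← integral_add_adjacent_intervals (hwi 0 r) (hwi r R),
    ← integral_add_adjacent_intervals (hwgi 0 r) (hwgi r R)]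
  set A := ∫ η in (0:ℝ)..r, w η with hA
  set Ag := ∫ η in (0:ℝ)..r, w η * g η with hAg
  set B := ∫ η in r..R, w η with hB
  set Bg := ∫ η in r..R, w η * g η with hBg
  have hA0 : 0 ≤ A := by
    apply integral_nonneg hr
    intro x hx
    exact hw0 x ⟨hx.1, hx.2.trans hrR⟩
  have hB0 : 0 ≤ B := by
    apply integral_nonneg hrR
    intro x hx
    exact hw0 x ⟨hr.trans hx.1, hx.2⟩
  have hAg' : Ag ≤ g r * A := by
    rw [hAg, hA, ← intervalIntegral.integral_const_mul]
    apply integral_mono_on hr (hwgi 0 r) ((hwi 0 r).const_mul _)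
    intro x hx
    have := hw0 x ⟨hx.1, hx.2.trans hrR⟩
    nlinarith [h1 x hx]
  have hBg' : g r * B ≤ Bg := by
    rw [hBg, hB, ← intervalIntegral.integral_const_mul]
    apply integral_mono_on hrR ((hwi r R).const_mul _) (hwgi r R)
    intro x hx
    have := hw0 x ⟨hr.trans hx.1, hx.2⟩
    nlinarith [h2 x hx]
  nlinarith [mul_nonneg hA0 hB0]

private lemma my_ftc (k : ℕ) (t : ℝ) :
    ∫ η in (0:ℝ)..t, Real.sinh η ^ k * Real.cosh η = Real.sinh t ^ (k + 1) / (k + 1) := by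
  have hd : ∀ x ∈ Set.uIcc (0:ℝ) t,
      HasDerivAt (fun x => Real.sinh x ^ (k + 1) / (k + 1)) (Real.sinh x ^ k * Real.cosh x) x := by
    intro x _
    have h := ((Real.hasDerivAt_sinh x).pow (k + 1)).div_const ((k : ℝ) + 1)
    have : ((k : ℝ) + 1) ≠ 0 := by positivity
    exact h.congr_deriv (by
      rw [Nat.add_sub_cancel, Nat.cast_add_one, mul_assoc, mul_div_cancel_left₀ _ this])
  rw [intervalIntegral.integral_eq_sub_of_hasDerivAt hd
    (((Real.continuous_sinh.pow k).mul Real.continuous_cosh).intervalIntegrable 0 t)]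
  simp

theorem stmt_1 (m : ℕ) (hm : 2 ≤ m) (r R : ℝ) (hr : 0 < r) (hrR : r < R) :
    (Real.sinh r / Real.sinh R) ^ m
      ≤ (∫ η in (0:ℝ)..r, Real.sinh η ^ (m - 1)) / (∫ η in (0:ℝ)..R, Real.sinh η ^ (m - 1)) ∧
    (∫ η in (0:ℝ)..r, Real.sinh η ^ (m - 1)) / (∫ η in (0:ℝ)..R, Real.sinh η ^ (m - 1))
      ≤ (Real.sinh r / Real.sinh R) ^ (m - 1) := by
  obtain ⟨k, rfl⟩ : ∃ k, m = k + 2 := ⟨m - 2, by omega⟩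
  have hR : (0:ℝ) < R := hr.trans hrR
  have hsR : 0 < Real.sinh R := Real.sinh_pos_iff.2 hR
  have hsr : 0 < Real.sinh r := Real.sinh_pos_iff.2 hr
  have hm1 : k + 2 - 1 = k + 1 := by omega
  rw [hm1]
  have hInt : ∀ t : ℝ, IntervalIntegrable (fun η => Real.sinh η ^ (k+1)) volume 0 t :=
    fun t => (Real.continuous_sinh.pow _).intervalIntegrable 0 t
  have hApos : 0 < ∫ η in (0:ℝ)..r, Real.sinh η ^ (k + 1) := by
    apply intervalIntegral_pos_of_pos_on (hInt r)
    · intro x hx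
      exact pow_pos (Real.sinh_pos_iff.2 hx.1) _
    · exact hr
  have hBpos : 0 < ∫ η in (0:ℝ)..R, Real.sinh η ^ (k + 1) := by
    apply intervalIntegral_pos_of_pos_on (hInt R)
    · intro x hx
      exact pow_pos (Real.sinh_pos_iff.2 hx.1) _
    · exact hR
  set A := ∫ η in (0:ℝ)..r, Real.sinh η ^ (k + 1) with hA
  set B := ∫ η in (0:ℝ)..R, Real.sinh η ^ (k + 1) with hB
  constructor
  · -- lower bound: w = sinh^{k+1}, g = cosh
    rw [div_pow, div_le_div_iff₀ (by positivity) hBpos]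
    have key := my_cheb (fun η => Real.sinh η ^ (k+1)) Real.cosh r R hr.le hrR.le
      (Real.continuous_sinh.pow _) Real.continuous_cosh
      (fun x hx => pow_nonneg (Real.sinh_nonneg_iff.2 hx.1) _)
      (fun x hx => Real.cosh_le_cosh.2 (by rw [abs_of_nonneg hx.1, abs_of_nonneg hr.le]; exact hx.2))
      (fun x hx => Real.cosh_le_cosh.2 (by
        rw [abs_of_nonneg (hr.le.trans hx.1), abs_of_nonneg hr.le]; exact hx.1))
    rw [my_ftc (k+1) r, my_ftc (k+1) R] at key
    have hk : (0:ℝ) < (k:ℝ) + 1 + 1 := by positivity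
    push_cast at key
    rw [← hA, ← hB, div_mul_eq_mul_div, ← mul_div_assoc, div_le_div_iff₀ hk hk] at key
    norm_num at key ⊢
    nlinarith [key]
  · -- upper bound: w = sinh^k * cosh, g = tanh
    rw [div_pow, div_le_div_iff₀ hBpos (by positivity)]
    have htanh : ∀ x y : ℝ, x ≤ y → Real.tanh x ≤ Real.tanh y := by
      intro x y hxy
      rw [Real.tanh_eq_sinh_div_cosh, Real.tanh_eq_sinh_div_cosh,
        div_le_div_iff₀ (Real.cosh_pos x) (Real.cosh_pos y)]
      nlinarith [Real.sinh_sub x y, Real.sinh_nonpos_iff.2 (sub_nonpos.2 hxy),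
        Real.cosh_pos x, Real.cosh_pos y]
    have key := my_cheb (fun η => Real.sinh η ^ k * Real.cosh η) Real.tanh r R hr.le hrR.le
      ((Real.continuous_sinh.pow _).mul Real.continuous_cosh)
      (by rw [show Real.tanh = fun x => Real.sinh x / Real.cosh x from funext Real.tanh_eq_sinh_div_cosh]
          exact Real.continuous_sinh.div Real.continuous_cosh fun x => (Real.cosh_pos x).ne')
      (fun x hx => mul_nonneg (pow_nonneg (Real.sinh_nonneg_iff.2 hx.1) _) (Real.cosh_pos x).le)
      (fun x hx => htanh _ _ hx.2)
      (fun x hx => htanh _ _ hx.1)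
    have hwg : ∀ t : ℝ, (∫ η in (0:ℝ)..t, Real.sinh η ^ k * Real.cosh η * Real.tanh η)
        = ∫ η in (0:ℝ)..t, Real.sinh η ^ (k+1) := by
      intro t
      apply intervalIntegral.integral_congr
      intro x _
      simp only [Real.tanh_eq_sinh_div_cosh]
      field_simp
      ring
    rw [hwg r, hwg R, my_ftc k r, my_ftc k R, ← hA, ← hB] at key
    have hk : (0:ℝ) < (k:ℝ) + 1 := by positivity
    push_cast at key
    rw [div_mul_eq_mul_div, ← mul_div_assoc, div_le_div_iff₀ hk hk] at key
    norm_num at key ⊢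
    nlinarith [key]
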